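/- Let H be a complex Hilbert space, P and Q orthogonal projections on H with ranges M and N such that M + N is closed, and Π := P_{M∩N}. Let J : H → H be a conjugate-linear isometric involution (J(x+y) = Jx + Jy, J(λx) = conj(λ)·Jx, J∘J = id, ‖Jx‖ = ‖x‖) satisfying J∘P∘J = Q. Suppose E, F, C ∈ H satisfy J(C) = C and E − F = (1 − PQ)C. Then (1 + Π − PQ)⁻¹E − (1 + Π − QP)⁻¹(JE) = (1 + Π − PQ)⁻¹F − (1 + Π − QP)⁻¹(JF). -/

import Mathlib

lemma proj_fix' {H : Type*} [NormedAddCommGroup H] [InnerProductSpace ℂ H]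
    {K : Submodule ℂ H} (S : H →L[ℂ] H)
    (hS : ∀ x : H, S x ∈ K ∧ x - S x ∈ Kᗮ) : ∀ m ∈ K, S m = m := by
  intro m hm
  have hd : S m - m ∈ K := K.sub_mem (hS m).1 hm
  have h0 : (inner ℂ (S m - m) (m - S m) : ℂ) = 0 :=
    (Submodule.mem_orthogonal _ _).1 (hS m).2 _ hd
  have : m - S m = -(S m - m) := by abel
  rw [this, inner_neg_right, neg_eq_zero, inner_self_eq_zero] at h0
  exact sub_eq_zero.1 h0

/-- Frame-independence lemma: let `P, Q` be the orthogonal projections onto `M, N` with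
`M + N` closed, `R` the orthogonal projection onto `M ∩ N`, and `J` a conjugate-linear
isometric involution with `J P J = Q`. If `J C = C` and `E - F = (1 - PQ)C`, then
`(1 + Π - PQ)⁻¹E - (1 + Π - QP)⁻¹(JE) = (1 + Π - PQ)⁻¹F - (1 + Π - QP)⁻¹(JF)`. -/
theorem stmt_17 {H : Type*} [NormedAddCommGroup H] [InnerProductSpace ℂ H] [CompleteSpace H]
    (M N : Submodule ℂ H) (P Q R : H →L[ℂ] H)
    (hP : ∀ x : H, P x ∈ M ∧ x - P x ∈ Mᗮ)
    (hQ : ∀ x : H, Q x ∈ N ∧ x - Q x ∈ Nᗮ)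
    (hR : ∀ x : H, R x ∈ M ⊓ N ∧ x - R x ∈ (M ⊓ N)ᗮ)
    (hMN : IsClosed ((M ⊔ N : Submodule ℂ H) : Set H))
    (J : H → H)
    (hJadd : ∀ x y : H, J (x + y) = J x + J y)
    (hJsmul : ∀ (c : ℂ) (x : H), J (c • x) = (starRingEnd ℂ c) • J x)
    (hJinv : ∀ x : H, J (J x) = x)
    (hJiso : ∀ x : H, ‖J x‖ = ‖x‖)
    (hJPJ : ∀ x : H, J (P (J x)) = Q x)
    (T T' : H →L[ℂ] H)
    (hT : T * (1 + R - P * Q) = 1 ∧ (1 + R - P * Q) * T = 1)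
    (hT' : T' * (1 + R - Q * P) = 1 ∧ (1 + R - Q * P) * T' = 1)
    (E F C : H) (hC : J C = C) (hEF : E - F = (1 - P * Q) C) :
    T E - T' (J E) = T F - T' (J F) := by
  have hPfix := proj_fix' P hP
  have hQfix := proj_fix' Q hQ
  have hRfix := proj_fix' R hR
  have hPR : ∀ x : H, P (R x) = R x := fun x => hPfix _ (hR x).1.1
  have hQR : ∀ x : H, Q (R x) = R x := fun x => hQfix _ (hR x).1.2
  have hRR : ∀ x : H, R (R x) = R x := fun x => hRfix _ (hR x).1
  have hTA : ∀ x : H, T (x + R x - P (Q x)) = x := by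
    intro x
    have := ContinuousLinearMap.ext_iff.1 hT.1 x
    simpa [ContinuousLinearMap.mul_apply, ContinuousLinearMap.add_apply,
      ContinuousLinearMap.sub_apply] using this
  have hT'A : ∀ x : H, T' (x + R x - Q (P x)) = x := by
    intro x
    have := ContinuousLinearMap.ext_iff.1 hT'.1 x
    simpa [ContinuousLinearMap.mul_apply, ContinuousLinearMap.add_apply,
      ContinuousLinearMap.sub_apply] using this
  have hTR : ∀ x : H, T (R x) = R x := by
    intro x
    have := hTA (R x)
    rwa [hRR, hQR, hPR, show R x + R x - R x = R x by abel] at this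
  have hT'R : ∀ x : H, T' (R x) = R x := by
    intro x
    have := hT'A (R x)
    rwa [hRR, hPR, hQR, show R x + R x - R x = R x by abel] at this
  have key : ∀ x : H, T (x - P (Q x)) = x - R x := by
    intro x
    have h1 : x - P (Q x) = (x + R x - P (Q x)) - R x := by abel
    rw [h1, map_sub, hTA, hTR]
  have key' : ∀ x : H, T' (x - Q (P x)) = x - R x := by
    intro x
    have h1 : x - Q (P x) = (x + R x - Q (P x)) - R x := by abel
    rw [h1, map_sub, hT'A, hT'R]
  -- J is additive/subtractive
  have hJsub : ∀ x y : H, J (x - y) = J x - J y := by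
    intro x y
    have : J ((x - y) + y) = J (x - y) + J y := hJadd _ _
    rw [sub_add_cancel] at this
    rw [this]; abel
  have hJP : ∀ x : H, J (P x) = Q (J x) := by
    intro x
    have := hJPJ (J x)
    rwa [hJinv] at this
  have hJQ : ∀ x : H, J (Q x) = P (J x) := by
    intro x
    have := congrArg J (hJPJ x)
    rw [hJinv] at this
    exact this.symm
  -- decompose E
  have hE : E = F + (C - P (Q C)) := by
    have : (1 - P * Q) C = C - P (Q C) := by
      simp [ContinuousLinearMap.sub_apply, ContinuousLinearMap.mul_apply]
    have h2 : E - F = C - P (Q C) := by rw [hEF, this]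
    have := sub_add_cancel E F
    rw [h2] at this
    linear_combination (norm := abel) this.symm
  have hJE : J E = J F + (C - Q (P C)) := by
    rw [hE, hJadd, hJsub, hC, hJP, hJQ, hC]
  calc T E - T' (J E)
      = (T F + (C - R C)) - (T' (J F) + (C - R C)) := by
        rw [hJE, hE, map_add, map_add, key, key']
    _ = T F - T' (J F) := by abel
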